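/- arXiv:1506.03804 — 2 statements merged into one kernel-verified Lean document; each statement's English description precedes it below -/
import Mathlib

section
/- Let $(X_j)_{j \geq 1}$ be an i.i.d. sequence of real random variables whose common law has a density $f$ with respect to Lebesgue measure on $\mathbf{R}$ that is positive Lebesgue-almost everywhere. Set $Y_j = X_1 + \cdots + X_j$, fix a measurable set $A \subseteq \mathbf{R}$, and let $\tau_A = \inf\{j \geq 1 : Y_j \in A\}$; assume $\mathbf{P}[\tau_A < \infty] = 1$. Then the law of $Y_{\tau_A}$ has a density with respect to Lebesgue measure restricted to $A$ which is positive Lebesgue-almost everywhere on $A$. -/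
open MeasureTheory ProbabilityTheory Set
open scoped ENNReal NNReal

private lemma nat_sInf_eq_succ_iff {S : Set ℕ} {n : ℕ} :
    sInf S = n + 1 ↔ (n + 1 ∈ S ∧ ∀ k < n + 1, k ∉ S) := by
  constructor
  · intro h
    have hne : S.Nonempty := by
      by_contra hne
      rw [Set.not_nonempty_iff_eq_empty] at hne
      simp [hne, Nat.sInf_empty] at h
    refine ⟨h ▸ Nat.sInf_mem hne, fun k hk => Nat.notMem_of_lt_sInf (h ▸ hk)⟩
  · rintro ⟨h1, h2⟩
    refine le_antisymm (Nat.sInf_le h1) ?_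
    by_contra hlt
    push_neg at hlt
    exact h2 _ hlt (Nat.sInf_mem ⟨_, h1⟩)

/-- If `(X_j)` is i.i.d. with an a.e. positive density `f` on `ℝ`, `Y_j = X_1 + ⋯ + X_j`,
and `τ_A` is the a.s. finite first hitting time of a measurable set `A` by the walk, then
the law of `Y_{τ_A}` has a density with respect to Lebesgue measure restricted to `A` which
is positive Lebesgue-a.e. on `A`. -/
theorem stmt_4 {Ω : Type*} [MeasurableSpace Ω] (μ : Measure Ω) [IsProbabilityMeasure μ]
    (X : ℕ → Ω → ℝ) (hXmeas : ∀ j, Measurable (X j))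
    (hindep : iIndepFun X μ)
    (f : ℝ → ℝ≥0∞) (hf : Measurable f)
    (hfpos : ∀ᵐ x ∂(volume : Measure ℝ), 0 < f x)
    (hXlaw : ∀ j, μ.map (X j) = volume.withDensity f)
    (Y : ℕ → Ω → ℝ) (hY : ∀ j ω, Y j ω = ∑ i ∈ Finset.range j, X i ω)
    (A : Set ℝ) (hA : MeasurableSet A)
    (τ : Ω → ℕ) (hτ : ∀ ω, τ ω = sInf {j : ℕ | 1 ≤ j ∧ Y j ω ∈ A})
    (hhit : ∀ᵐ ω ∂μ, ∃ j : ℕ, 1 ≤ j ∧ Y j ω ∈ A) :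
    ∃ g : ℝ → ℝ≥0∞, Measurable g ∧
      μ.map (fun ω => Y (τ ω) ω) = (volume.restrict A).withDensity g ∧
      ∀ᵐ y ∂(volume.restrict A), 0 < g y := by
  classical
  -- measurability of Y
  have hYmeas : ∀ n, Measurable (Y n) := by
    intro n
    have : Y n = fun ω => ∑ i ∈ Finset.range n, X i ω := funext fun ω => hY n ω
    rw [this]
    exact Finset.measurable_sum _ fun i _ => hXmeas i
  -- measurability of τ
  have hτmeas : Measurable τ := by
    apply measurable_to_countable'
    intro n
    match n with
    | 0 =>
      have : τ ⁻¹' {0} = ⋂ j, ⋂ (_ : 1 ≤ j), (Y j) ⁻¹' Aᶜ := by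
        ext ω
        simp only [mem_preimage, mem_singleton_iff, hτ, Nat.sInf_eq_zero, mem_iInter,
          Set.eq_empty_iff_forall_notMem, mem_setOf_eq, mem_compl_iff]
        constructor
        · rintro (⟨h, _⟩ | h) j hj
          · omega
          · exact fun hYA => h j ⟨hj, hYA⟩
        · intro h
          exact Or.inr fun j ⟨hj, hYA⟩ => h j hj hYA
      rw [this]
      exact MeasurableSet.iInter fun j => MeasurableSet.iInter fun _ =>
        (hYmeas j) hA.compl
    | n + 1 =>
      have : τ ⁻¹' {n + 1} =
          (Y (n + 1)) ⁻¹' A ∩ ⋂ k, ⋂ (_ : k < n + 1), ⋂ (_ : 1 ≤ k), (Y k) ⁻¹' Aᶜ := by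
        ext ω
        simp only [mem_preimage, mem_singleton_iff, hτ, nat_sInf_eq_succ_iff, mem_setOf_eq,
          mem_inter_iff, mem_iInter, mem_compl_iff]
        constructor
        · rintro ⟨⟨_, hYA⟩, h2⟩
          exact ⟨hYA, fun k hk hk1 hYk => h2 k hk ⟨hk1, hYk⟩⟩
        · rintro ⟨hYA, h2⟩
          exact ⟨⟨by omega, hYA⟩, fun k hk ⟨hk1, hYk⟩ => h2 k hk hk1 hYk⟩
      rw [this]
      exact ((hYmeas (n + 1)) hA).inter
        (MeasurableSet.iInter fun k => MeasurableSet.iInter fun _ =>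
          MeasurableSet.iInter fun _ => (hYmeas k) hA.compl)
  -- measurability of the stopped value
  have hYτmeas : Measurable (fun ω => Y (τ ω) ω) := by
    intro t ht
    have : (fun ω => Y (τ ω) ω) ⁻¹' t = ⋃ n, (τ ⁻¹' {n} ∩ (Y n) ⁻¹' t) := by
      ext ω
      simp only [mem_preimage, mem_iUnion, mem_inter_iff, mem_singleton_iff]
      exact ⟨fun h => ⟨τ ω, rfl, h⟩, fun ⟨n, hn, h⟩ => hn ▸ h⟩
    rw [this]
    exact MeasurableSet.iUnion fun n => (hτmeas (measurableSet_singleton n)).inter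
      ((hYmeas n) ht)
  -- law of Y n is absolutely continuous w.r.t. Lebesgue, for n ≥ 1
  have hlawY : ∀ n : ℕ, ∀ s : Set ℝ, MeasurableSet s → volume s = 0 →
      μ ((Y (n + 1)) ⁻¹' s) = 0 := by
    intro n s hs hs0
    set T : Finset ℕ := (Finset.range (n + 1)).erase 0 with hT
    have h0T : (0 : ℕ) ∉ T := Finset.notMem_erase 0 _
    set V : Ω → ℝ := fun ω => ∑ j ∈ T, X j ω with hV
    have hVmeas : Measurable V := Finset.measurable_sum _ fun i _ => hXmeas i
    have hYeq : ∀ ω, Y (n + 1) ω = V ω + X 0 ω := by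
      intro ω
      rw [hY, hV]
      rw [← Finset.add_sum_erase _ _ (Finset.mem_range.2 (Nat.succ_pos n))]
      ring
    have hInd : IndepFun V (X 0) μ := by
      have := hindep.indepFun_finset_sum_of_notMem hXmeas h0T
      have hsum : (∑ j ∈ T, X j) = V := by
        funext ω; simp [hV, Finset.sum_apply]
      rwa [hsum] at this
    have hmap : μ.map (fun ω => (V ω, X 0 ω)) = (μ.map V).prod (μ.map (X 0)) :=
      (indepFun_iff_map_prod_eq_prod_map_map hVmeas.aemeasurable
        (hXmeas 0).aemeasurable).1 hInd
    have hmeas_add : MeasurableSet {p : ℝ × ℝ | p.1 + p.2 ∈ s} :=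
      (measurable_fst.add measurable_snd) hs
    have key : μ ((Y (n + 1)) ⁻¹' s) =
        ((μ.map V).prod (μ.map (X 0))) {p : ℝ × ℝ | p.1 + p.2 ∈ s} := by
      rw [← hmap, Measure.map_apply (hVmeas.prodMk (hXmeas 0)) hmeas_add]
      congr 1
      ext ω
      simp [hYeq ω]
    rw [key, Measure.prod_apply hmeas_add]
    have : ∀ v : ℝ, (μ.map (X 0)) (Prod.mk v ⁻¹' {p : ℝ × ℝ | p.1 + p.2 ∈ s}) = 0 := by
      intro v
      have hpre : Prod.mk v ⁻¹' {p : ℝ × ℝ | p.1 + p.2 ∈ s} = (fun x => v + x) ⁻¹' s := rfl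
      rw [hpre, hXlaw 0]
      refine withDensity_absolutelyContinuous volume f ?_
      rw [measure_preimage_add]
      exact hs0
    simp only [this, lintegral_zero]
  -- τ = 0 is null
  have hτ0 : μ (τ ⁻¹' {0}) = 0 := by
    refine measure_mono_null ?_ (ae_iff.1 hhit)
    intro ω hω
    simp only [mem_preimage, mem_singleton_iff] at hω
    simp only [mem_setOf_eq]
    rintro ⟨j, hj, hYA⟩
    have hne : ({j : ℕ | 1 ≤ j ∧ Y j ω ∈ A}).Nonempty := ⟨j, hj, hYA⟩
    have := Nat.sInf_mem hne
    rw [← hτ ω] at this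
    have h1 := this.1
    omega
  set ν : Measure ℝ := μ.map (fun ω => Y (τ ω) ω) with hν
  haveI : IsProbabilityMeasure ν := Measure.isProbabilityMeasure_map hYτmeas.aemeasurable
  -- direction 1 : ν ≪ volume.restrict A
  have hac1 : ν ≪ volume.restrict A := by
    refine Measure.AbsolutelyContinuous.mk ?_
    intro s hs hs0
    rw [Measure.restrict_apply hs] at hs0
    rw [hν, Measure.map_apply hYτmeas hs]
    refine measure_mono_null ?_
      (measure_union_null hτ0 (measure_iUnion_null fun n =>
        hlawY n (s ∩ A) (hs.inter hA) hs0))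
    intro ω hω
    simp only [mem_preimage] at hω
    rcases Nat.eq_zero_or_pos (τ ω) with h0 | hpos
    · exact Or.inl (by simp [h0])
    · right
      obtain ⟨n, hn⟩ : ∃ n, τ ω = n + 1 := ⟨τ ω - 1, by omega⟩
      have hne : ({j : ℕ | 1 ≤ j ∧ Y j ω ∈ A}).Nonempty := by
        by_contra hne
        rw [Set.not_nonempty_iff_eq_empty] at hne
        have := hτ ω
        rw [hne, Nat.sInf_empty] at this
        omega
      have hmem := Nat.sInf_mem hne
      rw [← hτ ω] at hmem
      refine mem_iUnion.2 ⟨n, ?_⟩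
      have : Y (n + 1) ω ∈ s ∩ A := ⟨hn ▸ hω, hn ▸ hmem.2⟩
      exact this
  -- direction 2 : volume.restrict A ≪ ν
  have hac2 : volume.restrict A ≪ ν := by
    refine Measure.AbsolutelyContinuous.mk ?_
    intro s hs hs0
    rw [Measure.restrict_apply hs]
    -- on the event X 0 ∈ s ∩ A, we have τ = 1 and Y_τ = X 0 ∈ s
    have hsub : (X 0) ⁻¹' (s ∩ A) ⊆ (fun ω => Y (τ ω) ω) ⁻¹' s := by
      intro ω hω
      simp only [mem_preimage, mem_inter_iff] at hω
      have hY1 : Y 1 ω = X 0 ω := by rw [hY]; simp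
      have h1mem : (1 : ℕ) ∈ {j : ℕ | 1 ≤ j ∧ Y j ω ∈ A} := ⟨le_refl 1, by rw [hY1]; exact hω.2⟩
      have hτ1 : τ ω = 1 := by
        rw [hτ]
        refine le_antisymm (Nat.sInf_le h1mem) ?_
        exact Nat.sInf_mem ⟨1, h1mem⟩ |>.1
      simp only [mem_preimage, hτ1, hY1]
      exact hω.1
    have hX0 : μ ((X 0) ⁻¹' (s ∩ A)) = 0 := by
      refine le_antisymm ?_ (by simp)
      calc μ ((X 0) ⁻¹' (s ∩ A)) ≤ μ ((fun ω => Y (τ ω) ω) ⁻¹' s) := measure_mono hsub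
        _ = ν s := (Measure.map_apply hYτmeas hs).symm
        _ = 0 := hs0
    have hwd : (volume.withDensity f) (s ∩ A) = 0 := by
      rw [← hXlaw 0, Measure.map_apply (hXmeas 0) (hs.inter hA)]
      exact hX0
    rw [withDensity_apply_eq_zero hf] at hwd
    refine measure_mono_null (fun x hx => ?_)
      (measure_union_null hwd (ae_iff.1 hfpos))
    by_cases hfx : f x = 0
    · exact Or.inr (by simp [hfx])
    · exact Or.inl ⟨hfx, hx⟩
  -- conclude via Radon-Nikodym
  refine ⟨ν.rnDeriv (volume.restrict A), Measure.measurable_rnDeriv _ _, ?_, ?_⟩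
  · exact (Measure.withDensity_rnDeriv_eq ν (volume.restrict A) hac1).symm
  · exact hac2.ae_le (Measure.rnDeriv_pos hac1)
end

section
/- Fix $u > 0$ and $r > u$. Let $\phi$ be harmonic on the open strip/annulus $(-r, 0) \times (0, 2\pi)$ (with periodic identification in the second coordinate, i.e., harmonic on the cylinder annulus $[-r,0] \times [0,2\pi] \subseteq \mathcal{Q}$), continuous up to the boundary, and let $\phi_1$ (resp. $\phi_r$) be the bounded harmonic function on the half-cylinder $\mathcal{Q}_-$ (resp. $\mathcal{Q}_- - r$, the half-cylinder $\{\mathrm{Re}(z) \le -r\}$ shifted appropriately) with the same boundary values as $\phi$ on $\partial \mathcal{Q}_-$ (resp. on $\partial \mathcal{Q}_- - r$). Then for $z$ with $\mathrm{Re}(z) = -u$, $\phi(z) = (1 - u/r)\, \phi_1(z) + (u/r)\, \phi_r(z) + o(1)$ as $r \to \infty$ (uniformly for boundary data bounded by a fixed constant). -/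
open Complex Set

/-- A real function is harmonic on an open subset of `ℂ` if it is locally the real part of
a holomorphic function. -/
def HarmonicOnC (φ : ℂ → ℝ) (U : Set ℂ) : Prop :=
  ∀ z ∈ U, ∃ (V : Set ℂ) (f : ℂ → ℂ), IsOpen V ∧ z ∈ V ∧ V ⊆ U ∧
    DifferentiableOn ℂ f V ∧ ∀ w ∈ V, φ w = (f w).re

open Filter Topology

lemma HarmonicOnC.comb {φ φ' : ℂ → ℝ} {U U' U'' : Set ℂ} (h : HarmonicOnC φ U')
    (h' : HarmonicOnC φ' U'') (hU : U ⊆ U') (hU' : U ⊆ U'') (hUo : IsOpen U)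
    (c₁ c₂ c₃ d : ℝ) :
    HarmonicOnC (fun z => c₁ * φ z + c₂ * φ' z + c₃ * z.re + d) U := by
  intro z hz
  obtain ⟨V, f, hVo, hzV, hVU, hf, hre⟩ := h z (hU hz)
  obtain ⟨V', f', hVo', hzV', hVU', hf', hre'⟩ := h' z (hU' hz)
  refine ⟨V ∩ V' ∩ U, fun w => c₁ * f w + c₂ * f' w + c₃ * w + d,
    (hVo.inter hVo').inter hUo, ⟨⟨hzV, hzV'⟩, hz⟩, inter_subset_right, ?_, ?_⟩
  · apply DifferentiableOn.add_const
    apply DifferentiableOn.add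
    · exact ((hf.mono (by intro w hw; exact hw.1.1)).const_smul (c₁:ℂ)).add
        ((hf'.mono (by intro w hw; exact hw.1.2)).const_smul (c₂:ℂ)) |>.congr (fun w _ => by
          simp [smul_eq_mul])
    · exact (differentiable_id.differentiableOn).const_smul (c₃:ℂ) |>.congr (fun w _ => by
        simp [smul_eq_mul])
  · intro w hw
    simp [hre w hw.1.1, hre' w hw.1.2]

lemma strip_max {a b : ℝ} (hab : a < b) (ψ : ℂ → ℝ)
    (hper : ∀ z : ℂ, ψ (z + 2 * Real.pi * Complex.I) = ψ z)
    (hharm : HarmonicOnC ψ {z : ℂ | a < z.re ∧ z.re < b})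
    (hcont : ContinuousOn ψ {z : ℂ | a ≤ z.re ∧ z.re ≤ b})
    (hba : ∀ z : ℂ, z.re = a → ψ z ≤ 0)
    (hbb : ∀ z : ℂ, z.re = b → ψ z ≤ 0) :
    ∀ z : ℂ, a ≤ z.re → z.re ≤ b → ψ z ≤ 0 := by
  have pi_pos := Real.pi_pos
  set S : Set ℂ := {z : ℂ | a < z.re ∧ z.re < b} with hS
  set T : Set ℂ := {z : ℂ | a ≤ z.re ∧ z.re ≤ b} with hT
  have hST : S ⊆ T := fun z hz => ⟨hz.1.le, hz.2.le⟩
  have hSo : IsOpen S := by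
    have : S = Complex.re ⁻¹' Ioo a b := rfl
    rw [this]; exact isOpen_Ioo.preimage Complex.continuous_re
  -- integer periodicity
  have per_int : ∀ (n : ℤ) (z : ℂ), ψ (z + n * (2 * Real.pi * Complex.I)) = ψ z := by
    intro n
    induction n using Int.induction_on with
    | zero => intro z; simp
    | succ k ih =>
        intro z
        have e : z + (((k:ℤ) + 1 : ℤ) : ℂ) * (2 * Real.pi * Complex.I)
            = (z + ((k:ℤ) : ℂ) * (2 * Real.pi * Complex.I)) + 2 * Real.pi * Complex.I := by
          push_cast; ring
        rw [e, hper]; exact ih z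
    | pred k ih =>
        intro z
        have e : z + ((-(k:ℤ) - 1 : ℤ) : ℂ) * (2 * Real.pi * Complex.I)
            = (z + ((-(k:ℤ) : ℤ) : ℂ) * (2 * Real.pi * Complex.I)) - 2 * Real.pi * Complex.I := by
          push_cast; ring
        rw [e]
        have h2 := hper ((z + ((-(k:ℤ) : ℤ) : ℂ) * (2 * Real.pi * Complex.I)) - 2 * Real.pi * Complex.I)
        rw [sub_add_cancel] at h2
        rw [← h2]; exact ih z
  -- shift any point into the fundamental domain
  have shift : ∀ w : ℂ, ∃ w' : ℂ, ψ w' = ψ w ∧ w'.re = w.re ∧ 0 ≤ w'.im ∧ w'.im < 2 * Real.pi := by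
    intro w
    set n : ℤ := ⌊w.im / (2 * Real.pi)⌋ with hn
    refine ⟨w - ((n : ℝ) * (2 * Real.pi) : ℝ) * Complex.I, ?_, by simp, ?_, ?_⟩
    · have := per_int n (w - ((n : ℝ) * (2 * Real.pi) : ℝ) * Complex.I)
      have heq : w - ((n : ℝ) * (2 * Real.pi) : ℝ) * Complex.I + n * (2 * Real.pi * Complex.I) = w := by
        push_cast; ring
      rw [heq] at this; exact this.symm
    · have h1 : (n : ℝ) ≤ w.im / (2 * Real.pi) := Int.floor_le _
      have h1' : (n : ℝ) * (2 * Real.pi) ≤ w.im := (le_div_iff₀ (by linarith)).mp h1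
      simp; linarith
    · have h2 : w.im / (2 * Real.pi) < n + 1 := Int.lt_floor_add_one _
      have h2' : w.im < ((n:ℝ) + 1) * (2 * Real.pi) := (div_lt_iff₀ (by linarith)).mp h2
      simp; linarith
  -- compact fundamental domain
  set K : Set ℂ := {z : ℂ | (a ≤ z.re ∧ z.re ≤ b) ∧ 0 ≤ z.im ∧ z.im ≤ 2 * Real.pi} with hK
  have hKT : K ⊆ T := fun z hz => hz.1
  have hKc : IsCompact K := by
    apply Metric.isCompact_of_isClosed_isBounded
    · have : K = (Complex.re ⁻¹' Icc a b) ∩ (Complex.im ⁻¹' Icc 0 (2 * Real.pi)) := rfl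
      rw [this]
      exact (isClosed_Icc.preimage Complex.continuous_re).inter
        (isClosed_Icc.preimage Complex.continuous_im)
    · apply (Metric.isBounded_closedBall (x := (0:ℂ)) (r := |a| + |b| + 2 * Real.pi)).subset
      intro z hz
      rw [Metric.mem_closedBall, dist_zero_right]
      have h1 : |z.re| ≤ |a| + |b| := by
        rw [abs_le]
        have := neg_abs_le a; have := le_abs_self b; have := abs_nonneg a; have := abs_nonneg b
        constructor <;> linarith [hz.1.1, hz.1.2]
      have h2 : |z.im| ≤ 2 * Real.pi := by
        rw [abs_le]; constructor <;> linarith [hz.2.1, hz.2.2]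
      calc ‖z‖ ≤ |z.re| + |z.im| := Complex.norm_le_abs_re_add_abs_im z
        _ ≤ |a| + |b| + 2 * Real.pi := by linarith
  have hKne : K.Nonempty := ⟨(a : ℂ), by simp [hK]; constructor <;> [exact hab.le; positivity]⟩
  obtain ⟨z₀, hz₀K, hmax⟩ := hKc.exists_isMaxOn hKne (hcont.mono hKT)
  set m := ψ z₀ with hm
  have hmax' : ∀ w ∈ K, ψ w ≤ m := hmax
  have hle : ∀ w ∈ T, ψ w ≤ m := by
    intro w hw
    obtain ⟨w', hψ, hre, him0, him1⟩ := shift w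
    rw [← hψ]
    exact hmax' w' ⟨by rw [hre]; exact hw, him0, him1.le⟩
  -- suffices to show m ≤ 0
  suffices hm0 : m ≤ 0 by
    intro z hza hzb
    exact (hle z ⟨hza, hzb⟩).trans hm0
  by_contra hmpos
  push_neg at hmpos
  -- the max is attained in the open strip
  have hz₀S : z₀ ∈ S := by
    rcases lt_or_eq_of_le hz₀K.1.1 with h | h
    · rcases lt_or_eq_of_le hz₀K.1.2 with h' | h'
      · exact ⟨h, h'⟩
      · exact absurd (hbb z₀ h') (by linarith)
    · exact absurd (hba z₀ h.symm) (by linarith)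
  -- the level set of the max is open
  set A : Set ℂ := {w : ℂ | w ∈ S ∧ ψ w = m} with hA
  have hAopen : IsOpen A := by
    rw [Metric.isOpen_iff]
    rintro w ⟨hwS, hwm⟩
    obtain ⟨V, f, hVo, hwV, hVS, hf, hre⟩ := hharm w hwS
    obtain ⟨δ, hδ, hball⟩ := Metric.isOpen_iff.mp hVo w hwV
    refine ⟨δ, hδ, ?_⟩
    have hsub : Metric.ball w δ ⊆ S := hball.trans hVS
    have hgd : DifferentiableOn ℂ (fun x => Complex.exp (f x)) (Metric.ball w δ) :=
      (hf.mono hball).cexp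
    have hmaxg : IsMaxOn (norm ∘ fun x => Complex.exp (f x)) (Metric.ball w δ) w := by
      intro x hx
      show ‖Complex.exp (f x)‖ ≤ ‖Complex.exp (f w)‖
      rw [Complex.norm_exp, Complex.norm_exp,
        ← hre x (hball hx), ← hre w hwV]
      exact Real.exp_le_exp.mpr (by rw [hwm]; exact hle x (hST (hsub hx)))
    have heq := Complex.eqOn_of_isPreconnected_of_isMaxOn_norm
      (convex_ball w δ).isPreconnected Metric.isOpen_ball hgd
      (Metric.mem_ball_self hδ) hmaxg
    intro x hx
    refine ⟨hsub hx, ?_⟩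
    have := heq hx
    simp only [Function.const_apply] at this
    have habs : Real.exp (ψ x) = Real.exp (ψ w) := by
      rw [hre x (hball hx), hre w hwV, ← Complex.norm_exp, ← Complex.norm_exp, this]
    rw [← hwm]
    exact Real.exp_injective habs
  -- the complement is open as well
  set B : Set ℂ := S ∩ ψ ⁻¹' ({m}ᶜ) with hB
  have hBopen : IsOpen B :=
    (hcont.mono hST).isOpen_inter_preimage hSo isOpen_compl_singleton
  have hSpre : IsPreconnected S := by
    have hconv : Convex ℝ S := (convex_Ioo a b).linear_preimage Complex.reLm
    exact hconv.isPreconnected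
  have hall : ∀ w ∈ S, ψ w = m := by
    intro w hw
    by_contra hne
    obtain ⟨y, hyS, hyA, hyB⟩ := hSpre A B hAopen hBopen
      (fun x hx => by by_cases hxm : ψ x = m
                      · exact Or.inl ⟨hx, hxm⟩
                      · exact Or.inr ⟨hx, hxm⟩)
      ⟨z₀, hz₀S, hz₀S, rfl⟩ ⟨w, hw, hw, hne⟩
    exact hyB.2 hyA.2
  -- reach the boundary, contradiction
  set p : ℂ := ⟨b, z₀.im⟩ with hp
  have hpT : p ∈ T := ⟨hab.le, le_refl b⟩
  have hpc : p ∈ closure S := by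
    rw [Metric.mem_closure_iff]
    intro η hη
    set δ' : ℝ := min (η / 2) ((b - a) / 2) with hδ'
    have hδ'pos : 0 < δ' := lt_min (by linarith) (by linarith)
    refine ⟨p - (δ' : ℂ), ⟨?_, ?_⟩, ?_⟩
    · simp only [Complex.sub_re, Complex.ofReal_re, hp]
      have : δ' ≤ (b - a) / 2 := min_le_right _ _
      linarith
    · simp only [Complex.sub_re, Complex.ofReal_re, hp]
      linarith
    · rw [Complex.dist_eq]
      have : p - (p - (δ' : ℂ)) = (δ' : ℂ) := by ring
      rw [this, Complex.norm_real, Real.norm_eq_abs, abs_of_pos hδ'pos]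
      have : δ' ≤ η / 2 := min_le_left _ _
      linarith
  have hne : (𝓝[S] p).NeBot := mem_closure_iff_nhdsWithin_neBot.mp hpc
  have h1 : Tendsto ψ (𝓝[S] p) (𝓝 (ψ p)) := (hcont p hpT).mono hST
  have h2 : Tendsto ψ (𝓝[S] p) (𝓝 m) := by
    have hev : ψ =ᶠ[𝓝[S] p] (fun _ => m) := by
      filter_upwards [self_mem_nhdsWithin] with x hx
      exact hall x hx
    exact Filter.Tendsto.congr' hev.symm tendsto_const_nhds
  have : ψ p = m := tendsto_nhds_unique h1 h2
  have := hbb p rfl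
  linarith

lemma HarmonicOnC.aff {g : ℂ → ℝ} {U : Set ℂ} (h : HarmonicOnC g U) (c₁ c₃ d : ℝ) :
    HarmonicOnC (fun z => c₁ * g z + c₃ * z.re + d) U := by
  intro z hz
  obtain ⟨V, f, hVo, hzV, hVU, hf, hre⟩ := h z hz
  refine ⟨V, fun w => c₁ * f w + c₃ * w + d, hVo, hzV, hVU, ?_, ?_⟩
  · apply DifferentiableOn.add_const
    apply DifferentiableOn.add
    · exact (hf.const_smul (c₁:ℂ)).congr (fun w _ => by simp [smul_eq_mul])
    · exact ((differentiable_id.differentiableOn).const_smul (c₃:ℂ)).congr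
        (fun w _ => by simp [smul_eq_mul])
  · intro w hw
    simp [hre w hw]

lemma HarmonicOnC.congr' {g g' : ℂ → ℝ} {U : Set ℂ} (h : HarmonicOnC g U)
    (he : ∀ z, g z = g' z) : HarmonicOnC g' U := by
  have : g = g' := funext he
  rwa [this] at h

lemma interp {a b α β : ℝ} (hab : a < b) (g : ℂ → ℝ)
    (hper : ∀ z : ℂ, g (z + 2 * Real.pi * Complex.I) = g z)
    (hharm : HarmonicOnC g {z : ℂ | a < z.re ∧ z.re < b})
    (hcont : ContinuousOn g {z : ℂ | a ≤ z.re ∧ z.re ≤ b})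
    (h₁ : ∀ z : ℂ, z.re = a → g z ≤ α + β * a)
    (h₂ : ∀ z : ℂ, z.re = b → g z ≤ α + β * b) :
    ∀ z : ℂ, a ≤ z.re → z.re ≤ b → g z ≤ α + β * z.re := by
  have h := strip_max hab (fun z => 1 * g z + (-β) * z.re + (-α))
    (by intro z
        rw [hper z, show (z + 2 * Real.pi * Complex.I).re = z.re by simp])
    (hharm.aff 1 (-β) (-α)) ?_ ?_ ?_
  · intro z hza hzb
    have := h z hza hzb
    linarith
  · exact ((continuousOn_const.mul hcont).add
      (continuousOn_const.mul Complex.continuous_re.continuousOn)).add continuousOn_const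
  · intro z hz
    have := h₁ z hz
    simp only [hz]
    linarith
  · intro z hz
    have := h₂ z hz
    simp only [hz]
    linarith

/-- Harmonic interpolation on the cylinder annulus `[-r,0] × [0,2π]` (realized as the
`2πi`-periodic strip `{-r ≤ Re z ≤ 0}` in `ℂ`): if `φ` is harmonic in the annulus,
continuous up to the boundary and bounded by `M`, and `φ₁` (resp. `φᵣ`) is the bounded
harmonic function on the half-cylinder `{Re z ≤ 0}` (resp. `{Re z ≥ -r}`) with the same
boundary values as `φ` on `{Re z = 0}` (resp. `{Re z = -r}`), then for `Re z = -u`,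
`φ(z) = (1 - u/r) φ₁(z) + (u/r) φᵣ(z) + o(1)` as `r → ∞`, uniformly over boundary data
bounded by `M`. -/
theorem stmt_11 (M u ε : ℝ) (hM : 0 < M) (hu : 0 < u) (hε : 0 < ε) :
    ∃ r₀ : ℝ, u < r₀ ∧ ∀ r : ℝ, r₀ ≤ r →
      ∀ φ φ₁ φᵣ : ℂ → ℝ,
        -- all three functions are `2πi`-periodic (functions on the cylinder)
        (∀ z : ℂ, φ (z + 2 * Real.pi * Complex.I) = φ z) →
        (∀ z : ℂ, φ₁ (z + 2 * Real.pi * Complex.I) = φ₁ z) →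
        (∀ z : ℂ, φᵣ (z + 2 * Real.pi * Complex.I) = φᵣ z) →
        -- `φ` is harmonic in the annulus, continuous up to its boundary, bounded by `M`
        HarmonicOnC φ {z : ℂ | -r < z.re ∧ z.re < 0} →
        ContinuousOn φ {z : ℂ | -r ≤ z.re ∧ z.re ≤ 0} →
        (∀ z : ℂ, -r ≤ z.re → z.re ≤ 0 → |φ z| ≤ M) →
        -- `φ₁` is bounded harmonic on `{Re z < 0}` with boundary values `φ` on `{Re z = 0}`
        HarmonicOnC φ₁ {z : ℂ | z.re < 0} →
        ContinuousOn φ₁ {z : ℂ | z.re ≤ 0} →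
        (∀ z : ℂ, z.re ≤ 0 → |φ₁ z| ≤ M) →
        (∀ z : ℂ, z.re = 0 → φ₁ z = φ z) →
        -- `φᵣ` is bounded harmonic on `{Re z > -r}` with boundary values `φ` on `{Re z = -r}`
        HarmonicOnC φᵣ {z : ℂ | -r < z.re} →
        ContinuousOn φᵣ {z : ℂ | -r ≤ z.re} →
        (∀ z : ℂ, -r ≤ z.re → |φᵣ z| ≤ M) →
        (∀ z : ℂ, z.re = -r → φᵣ z = φ z) →
        ∀ z : ℂ, z.re = -u →
          |φ z - ((1 - u / r) * φ₁ z + (u / r) * φᵣ z)| ≤ ε := by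
  refine ⟨max (u + 1) (4 * M * u / ε), lt_of_lt_of_le (by linarith) (le_max_left _ _), ?_⟩
  intro r hr φ φ₁ φᵣ hperφ hper1 hperr hharmφ hcontφ hbdφ hharm1 hcont1 hbd1 hbv1
    hharmr hcontr hbdr hbvr z hz
  have hru : u + 1 ≤ r := (le_max_left _ _).trans hr
  have hrε : 4 * M * u / ε ≤ r := (le_max_right _ _).trans hr
  have hr0 : 0 < r := by linarith
  have hur : u < r := by linarith
  have hab : -r < (0:ℝ) := by linarith
  set S : Set ℂ := {w : ℂ | -r < w.re ∧ w.re < 0} with hS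
  have hSo : IsOpen S := by
    have : S = Complex.re ⁻¹' Ioo (-r) 0 := rfl
    rw [this]; exact isOpen_Ioo.preimage Complex.continuous_re
  have hS1 : S ⊆ {w : ℂ | w.re < 0} := fun w hw => hw.2
  have hSr : S ⊆ {w : ℂ | -r < w.re} := fun w hw => hw.1
  have hT1 : {w : ℂ | -r ≤ w.re ∧ w.re ≤ 0} ⊆ {w : ℂ | w.re ≤ 0} := fun w hw => hw.2
  have hTr : {w : ℂ | -r ≤ w.re ∧ w.re ≤ 0} ⊆ {w : ℂ | -r ≤ w.re} := fun w hw => hw.1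
  -- harmonicity of differences
  have hd1 : HarmonicOnC (fun w => φ w - φ₁ w) S :=
    (HarmonicOnC.comb hharmφ hharm1 (le_refl S) hS1 hSo 1 (-1) 0 0).congr' (fun w => by ring)
  have hd1' : HarmonicOnC (fun w => φ₁ w - φ w) S :=
    (HarmonicOnC.comb hharm1 hharmφ hS1 (le_refl S) hSo 1 (-1) 0 0).congr' (fun w => by ring)
  have hdr : HarmonicOnC (fun w => φ w - φᵣ w) S :=
    (HarmonicOnC.comb hharmφ hharmr (le_refl S) hSr hSo 1 (-1) 0 0).congr' (fun w => by ring)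
  have hdr' : HarmonicOnC (fun w => φᵣ w - φ w) S :=
    (HarmonicOnC.comb hharmr hharmφ hSr (le_refl S) hSo 1 (-1) 0 0).congr' (fun w => by ring)
  -- continuity of differences
  have hc1 : ContinuousOn (fun w => φ w - φ₁ w) {w : ℂ | -r ≤ w.re ∧ w.re ≤ 0} :=
    hcontφ.sub (hcont1.mono hT1)
  have hcr : ContinuousOn (fun w => φ w - φᵣ w) {w : ℂ | -r ≤ w.re ∧ w.re ≤ 0} :=
    hcontφ.sub (hcontr.mono hTr)
  -- boundary estimates at re = -r for the φ₁-difference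
  have hb1 : ∀ w : ℂ, w.re = -r → |φ w - φ₁ w| ≤ 2 * M := by
    intro w hw
    have b1 := hbdφ w (by rw [hw]) (by rw [hw]; linarith)
    have b2 := hbd1 w (by rw [hw]; linarith)
    have := abs_le.mp b1; have := abs_le.mp b2
    rw [abs_le]; constructor <;> linarith [(abs_le.mp b1).1, (abs_le.mp b1).2,
      (abs_le.mp b2).1, (abs_le.mp b2).2]
  have hbr : ∀ w : ℂ, w.re = 0 → |φ w - φᵣ w| ≤ 2 * M := by
    intro w hw
    have b1 := hbdφ w (by rw [hw]; linarith) (by rw [hw])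
    have b2 := hbdr w (by rw [hw]; linarith)
    rw [abs_le]; constructor <;> linarith [(abs_le.mp b1).1, (abs_le.mp b1).2,
      (abs_le.mp b2).1, (abs_le.mp b2).2]
  -- four applications of the interpolation bound
  have per1 : ∀ w : ℂ, (fun w => φ w - φ₁ w) (w + 2 * Real.pi * Complex.I)
      = (fun w => φ w - φ₁ w) w := fun w => by simp only; rw [hperφ, hper1]
  have per1' : ∀ w : ℂ, (fun w => φ₁ w - φ w) (w + 2 * Real.pi * Complex.I)
      = (fun w => φ₁ w - φ w) w := fun w => by simp only; rw [hperφ, hper1]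
  have perr : ∀ w : ℂ, (fun w => φ w - φᵣ w) (w + 2 * Real.pi * Complex.I)
      = (fun w => φ w - φᵣ w) w := fun w => by simp only; rw [hperφ, hperr]
  have perr' : ∀ w : ℂ, (fun w => φᵣ w - φ w) (w + 2 * Real.pi * Complex.I)
      = (fun w => φᵣ w - φ w) w := fun w => by simp only; rw [hperφ, hperr]
  have e2M : (0:ℝ) + (-(2 * M / r)) * (-r) = 2 * M := by field_simp; ring
  have A1 := interp (α := 0) (β := -(2 * M / r)) hab (fun w => φ w - φ₁ w) per1 hd1 hc1
    (fun w hw => by show φ w - φ₁ w ≤ 0 + -(2 * M / r) * -r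
                    rw [e2M]; linarith [(abs_le.mp (hb1 w hw)).2])
    (fun w hw => by show φ w - φ₁ w ≤ 0 + -(2 * M / r) * 0
                    rw [hbv1 w hw]; simp)
  have A2 := interp (α := 0) (β := -(2 * M / r)) hab (fun w => φ₁ w - φ w) per1'
    hd1' (hc1.neg.congr (fun w _ => by simp))
    (fun w hw => by show φ₁ w - φ w ≤ 0 + -(2 * M / r) * -r
                    rw [e2M]; linarith [(abs_le.mp (hb1 w hw)).1])
    (fun w hw => by show φ₁ w - φ w ≤ 0 + -(2 * M / r) * 0
                    rw [hbv1 w hw]; simp)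
  have er0 : (2 * M : ℝ) + (2 * M / r) * (-r) = 0 := by field_simp; ring
  have A3 := interp (α := 2 * M) (β := 2 * M / r) hab (fun w => φ w - φᵣ w) perr hdr hcr
    (fun w hw => by show φ w - φᵣ w ≤ 2 * M + 2 * M / r * -r
                    rw [hbvr w hw]; linarith)
    (fun w hw => by show φ w - φᵣ w ≤ 2 * M + 2 * M / r * 0
                    have := (abs_le.mp (hbr w hw)).2; linarith)
  have A4 := interp (α := 2 * M) (β := 2 * M / r) hab (fun w => φᵣ w - φ w) perr'
    hdr' (hcr.neg.congr (fun w _ => by simp))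
    (fun w hw => by show φᵣ w - φ w ≤ 2 * M + 2 * M / r * -r
                    rw [hbvr w hw]; linarith)
    (fun w hw => by show φᵣ w - φ w ≤ 2 * M + 2 * M / r * 0
                    have := (abs_le.mp (hbr w hw)).1; linarith)
  -- specialize at z
  have hz1 : -r ≤ z.re := by rw [hz]; linarith
  have hz2 : z.re ≤ 0 := by rw [hz]; linarith
  have c1 := A1 z hz1 hz2; have c2 := A2 z hz1 hz2
  have c3 := A3 z hz1 hz2; have c4 := A4 z hz1 hz2
  simp only [hz] at c1 c2 c3 c4
  have eq1 : (0:ℝ) + (-(2 * M / r)) * (-u) = 2 * M * (u / r) := by ring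
  have eq3 : (2 * M : ℝ) + (2 * M / r) * (-u) = 2 * M * (1 - u / r) := by field_simp; ring
  rw [eq1] at c1 c2
  rw [eq3] at c3 c4
  have hX : |φ z - φ₁ z| ≤ 2 * M * (u / r) := abs_le.mpr ⟨by linarith, c1⟩
  have hY : |φ z - φᵣ z| ≤ 2 * M * (1 - u / r) := abs_le.mpr ⟨by linarith, c3⟩
  have hq0 : 0 ≤ u / r := by positivity
  have hq1 : u / r ≤ 1 := by rw [div_le_one hr0]; linarith
  have hfin : 4 * M * (u / r) ≤ ε := by
    have h4 : 4 * M * u ≤ r * ε := (div_le_iff₀ hε).mp hrε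
    rw [show 4 * M * (u / r) = 4 * M * u / r by ring, div_le_iff₀ hr0]
    linarith
  have hsplit : φ z - ((1 - u / r) * φ₁ z + (u / r) * φᵣ z)
      = (1 - u / r) * (φ z - φ₁ z) + (u / r) * (φ z - φᵣ z) := by ring
  rw [hsplit]
  calc |(1 - u / r) * (φ z - φ₁ z) + (u / r) * (φ z - φᵣ z)|
      ≤ |(1 - u / r) * (φ z - φ₁ z)| + |(u / r) * (φ z - φᵣ z)| := abs_add_le _ _
    _ = (1 - u / r) * |φ z - φ₁ z| + (u / r) * |φ z - φᵣ z| := by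
        rw [abs_mul, abs_mul, _root_.abs_of_nonneg (by linarith), _root_.abs_of_nonneg hq0]
    _ ≤ ε := by nlinarith [mul_le_mul_of_nonneg_left hX (by linarith : (0:ℝ) ≤ 1 - u / r),
        mul_le_mul_of_nonneg_left hY hq0, mul_nonneg hq0 (abs_nonneg (φ z - φᵣ z)),
        sq_nonneg (u / r)]
end
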